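/- arXiv:1603.07379 — 2 statements merged into one kernel-verified Lean document; each statement's English description precedes it below -/
import Mathlib

section
/- Let L and R be the left and right eigenvector matrices of A₁ = [[0,-1,0],[-1/v̄,0,1/v̄],[0,1,0]] (with λ₃ = √(2/v̄)), and let A₂ = diag(0, μ̃/v̄, κ/v̄) with μ̃, κ, v̄ > 0. Then the matrix A₄ := L A₂ R is symmetric and positive semidefinite. -/
open Matrix

set_option maxHeartbeats 1600000 in
/-- With `L, R` the left/right eigenvector matrices of
`A₁ = [[0,-1,0],[-1/v̄,0,1/v̄],[0,1,0]]` (with `λ₃ = √(2/v̄)`), and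
`A₂ = diag(0, μ̃/v̄, κ/v̄)` with `μ̃, κ, v̄ > 0`, the matrix `A₄ = L A₂ R` is symmetric and
positive semidefinite. -/
theorem stmt6 (v μ κ : ℝ) (hv : 0 < v) (hμ : 0 < μ) (hκ : 0 < κ) :
    let lam : ℝ := Real.sqrt (2 / v)
    let L : Matrix (Fin 3) (Fin 3) ℝ :=
      !![-(1 / 2), -(1 / lam), 1 / 2;
         Real.sqrt (1 / 2), 0, Real.sqrt (1 / 2);
         -(1 / 2), 1 / lam, 1 / 2]
    let R : Matrix (Fin 3) (Fin 3) ℝ :=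
      !![-(1 / 2), Real.sqrt (1 / 2), -(1 / 2);
         -(lam / 2), 0, lam / 2;
         1 / 2, Real.sqrt (1 / 2), 1 / 2]
    let A₂ : Matrix (Fin 3) (Fin 3) ℝ := Matrix.diagonal ![0, μ / v, κ / v]
    (L * A₂ * R).IsSymm ∧ (L * A₂ * R).PosSemidef := by
  intro lam L R A₂
  have hL : L = !![-(1 / 2), -(1 / lam), 1 / 2;
         Real.sqrt (1 / 2), 0, Real.sqrt (1 / 2);
         -(1 / 2), 1 / lam, 1 / 2] := rfl
  have hR : R = !![-(1 / 2), Real.sqrt (1 / 2), -(1 / 2);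
         -(lam / 2), 0, lam / 2;
         1 / 2, Real.sqrt (1 / 2), 1 / 2] := rfl
  have hA2 : A₂ = !![0, 0, 0; 0, μ / v, 0; 0, 0, κ / v] := by
    ext i j
    fin_cases i <;> fin_cases j <;>
      simp [A₂, Matrix.diagonal, Matrix.vecHead, Matrix.vecTail]
  have hlam2 : lam * lam = 2 / v := Real.mul_self_sqrt (by positivity)
  have hlam0 : lam ≠ 0 := by
    have : (0:ℝ) < lam := Real.sqrt_pos.mpr (by positivity)
    linarith
  clear_value lam L R A₂
  subst hL hR hA2
  set s : ℝ := Real.sqrt (1 / 2) with hs_def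
  set a : ℝ := Real.sqrt (μ / (2 * v)) with ha_def
  set b : ℝ := Real.sqrt (κ / v) with hb_def
  have hs2 : s * s = 1 / 2 := Real.mul_self_sqrt (by norm_num)
  have ha2 : a * a = μ / (2 * v) := Real.mul_self_sqrt (by positivity)
  have hb2 : b * b = κ / v := Real.mul_self_sqrt (by positivity)
  clear_value s a b
  set C : Matrix (Fin 3) (Fin 3) ℝ :=
    !![a, 0, -a; b / 2, b * s, b / 2; 0, 0, 0] with hC
  have hCT : Cᵀ = !![a, b / 2, 0; 0, b * s, 0; -a, b / 2, 0] := by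
    ext i j
    fin_cases i <;> fin_cases j <;> simp [C, Matrix.vecHead, Matrix.vecTail]
  have hv' : v ≠ 0 := ne_of_gt hv
  have ha2' : a * a * (2 * v) = μ := by rw [ha2]; field_simp
  have hb2' : b * b * v = κ := by rw [hb2]; field_simp
  have key : !![-(1 / 2), -(1 / lam), 1 / 2; s, 0, s; -(1 / 2), 1 / lam, 1 / 2] *
      !![0, 0, 0; 0, μ / v, 0; 0, 0, κ / v] *
      !![-(1 / 2), s, -(1 / 2); -(lam / 2), 0, lam / 2; 1 / 2, s, 1 / 2] = Cᵀ * C := by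
    rw [hCT, hC]
    rw [Matrix.mul_fin_three, Matrix.mul_fin_three, Matrix.mul_fin_three]
    ext i j
    fin_cases i <;> fin_cases j <;>
      simp [Matrix.vecHead, Matrix.vecTail] <;>
      field_simp <;>
      first
        | linear_combination (-16 * lam * v) * ha2' + (-8 * lam * v) * hb2'
        | linear_combination (16 * lam * v) * ha2' + (-8 * lam * v) * hb2'
        | linear_combination (-2 * s) * hb2'
        | linear_combination (-s * s) * hb2'
        | linear_combination (-2) * ha2' + (-1) * hb2'
        | linear_combination 2 * ha2' + (-1) * hb2'
        | linear_combination (-s) * hb2'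
  rw [key]
  have hpsd := Matrix.posSemidef_conjTranspose_mul_self C
  refine ⟨?_, hpsd⟩
  have hherm := hpsd.1
  ext i j
  have := congrFun (congrFun hpsd.1 i) j
  simpa [Matrix.conjTranspose_apply, Matrix.transpose_apply] using this
end

section
/- Let a, h : ℝ → ℝ be positive bounded continuous functions, a₊, h₊ > 0 constants, and suppose |a(x) - a₊| ≤ C_a r(x) and |h(x) - h₊| ≤ C_h r(x) for x ≥ 1, where r ∈ L¹([1, ∞)) is nonnegative. If (v, w) : [1, ∞) → ℝ² solves v' = h w, w' = -a v with v(x), w(x) → 0 as x → +∞, then (v, w) ≡ 0 on [1, ∞). -/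
open MeasureTheory Filter

/-- Let `a, h` be positive bounded continuous functions converging to `a₊, h₊ > 0` at `+∞`
at an integrable rate `r`. If `(v, w)` solves `v' = h w`, `w' = -a v` on `[1,∞)` with
`v, w → 0` at `+∞`, then `(v, w) ≡ 0` on `[1,∞)`. -/
theorem stmt16 (a h r : ℝ → ℝ) (ap hp Ca Ch : ℝ)
    (hacont : Continuous a) (hhcont : Continuous h)
    (hapos : ∀ x, 0 < a x) (hhpos : ∀ x, 0 < h x)
    (habdd : ∃ Ma, ∀ x, a x ≤ Ma) (hhbdd : ∃ Mh, ∀ x, h x ≤ Mh)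
    (hap : 0 < ap) (hhp : 0 < hp)
    (hrnn : ∀ x, 0 ≤ r x)
    (hrint : IntegrableOn r (Set.Ici (1 : ℝ)) volume)
    (hadec : ∀ x ≥ (1 : ℝ), |a x - ap| ≤ Ca * r x)
    (hhdec : ∀ x ≥ (1 : ℝ), |h x - hp| ≤ Ch * r x)
    (v w : ℝ → ℝ)
    (hv : ∀ x ≥ (1 : ℝ), HasDerivAt v (h x * w x) x)
    (hw : ∀ x ≥ (1 : ℝ), HasDerivAt w (-(a x * v x)) x)
    (hv0 : Tendsto v atTop (nhds 0)) (hw0 : Tendsto w atTop (nhds 0)) :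
    ∀ x ≥ (1 : ℝ), v x = 0 ∧ w x = 0 := by
  set s : ℝ := Real.sqrt (ap * hp) with hs
  have hspos : 0 < s := Real.sqrt_pos.mpr (mul_pos hap hhp)
  set ρ : ℝ → ℝ := fun x => ap * h x - hp * a x with hρ
  have hρcont : Continuous ρ := by continuity
  set φ : ℝ → ℝ := fun x => |ρ x| / s with hφ
  have hφcont : Continuous φ := (hρcont.abs).div_const s
  have hφnn : ∀ x, 0 ≤ φ x := fun x => div_nonneg (abs_nonneg _) hspos.le
  have hρbd : ∀ x ≥ (1:ℝ), |ρ x| ≤ (ap * Ch + hp * Ca) * r x := by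
    intro x hx
    have h1 := hadec x hx
    have h2 := hhdec x hx
    have he : ρ x = ap * (h x - hp) - hp * (a x - ap) := by simp [hρ]; ring
    rw [he]
    calc |ap * (h x - hp) - hp * (a x - ap)| ≤ |ap * (h x - hp)| + |hp * (a x - ap)| :=
          abs_sub _ _
      _ = ap * |h x - hp| + hp * |a x - ap| := by
          rw [abs_mul, abs_mul, abs_of_pos hap, abs_of_pos hhp]
      _ ≤ ap * (Ch * r x) + hp * (Ca * r x) := by gcongr
      _ = (ap * Ch + hp * Ca) * r x := by ring
  -- φ integrable on Ici 1
  have hφint : IntegrableOn φ (Set.Ici (1:ℝ)) volume := by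
    apply Integrable.mono' (g := fun x => ((ap * Ch + hp * Ca) / s) * r x)
      (hrint.const_mul _) (hφcont.aestronglyMeasurable.restrict)
    filter_upwards [ae_restrict_mem measurableSet_Ici] with x hx
    rw [Real.norm_eq_abs, abs_of_nonneg (hφnn x)]
    calc φ x = |ρ x| / s := rfl
      _ ≤ ((ap * Ch + hp * Ca) * r x) / s := by gcongr; exact hρbd x hx
      _ = (ap * Ch + hp * Ca) / s * r x := by ring
  -- antiderivative R of φ
  set R : ℝ → ℝ := fun x => ∫ t in (1:ℝ)..x, φ t with hR
  have hRderiv : ∀ x : ℝ, HasDerivAt R (φ x) x := fun x =>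
    (hφcont.integral_hasStrictDerivAt 1 x).hasDerivAt
  have hRbdd : ∀ x : ℝ, R x ≤ ∫ t in Set.Ici (1:ℝ), φ t := by
    intro x
    rcases le_total x 1 with hx | hx
    · have : R x ≤ 0 := by
        rw [hR]
        simp only
        rw [intervalIntegral.integral_symm]
        simp only [neg_nonpos]
        exact intervalIntegral.integral_nonneg hx (fun t _ => hφnn t)
      exact this.trans (setIntegral_nonneg measurableSet_Ici (fun t _ => hφnn t))
    · rw [hR]
      simp only
      rw [intervalIntegral.integral_of_le hx]
      refine setIntegral_mono_set hφint ?_ ?_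
      · filter_upwards with t using hφnn t
      · exact HasSubset.Subset.eventuallyLE (fun t ht => le_of_lt ht.1)
  -- energy
  set F : ℝ → ℝ := fun x => ap * v x ^ 2 + hp * w x ^ 2 with hF
  have hFnn : ∀ x, 0 ≤ F x := fun x =>
    add_nonneg (mul_nonneg hap.le (sq_nonneg _)) (mul_nonneg hhp.le (sq_nonneg _))
  have hFderiv : ∀ x ≥ (1:ℝ), HasDerivAt F (2 * v x * w x * ρ x) x := by
    intro x hx
    have h1 : HasDerivAt (fun y => ap * v y ^ 2) (ap * (2 * v x ^ 1 * (h x * w x))) x :=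
      ((hv x hx).pow 2).const_mul ap
    have h2 : HasDerivAt (fun y => hp * w y ^ 2) (hp * (2 * w x ^ 1 * (-(a x * v x)))) x :=
      ((hw x hx).pow 2).const_mul hp
    have := h1.add h2
    refine HasDerivAt.congr_deriv this ?_
    simp [hρ]; ring
  set G : ℝ → ℝ := fun x => F x * Real.exp (R x) with hG
  have hGderiv : ∀ x ≥ (1:ℝ),
      HasDerivAt G ((2 * v x * w x * ρ x + F x * φ x) * Real.exp (R x)) x := by
    intro x hx
    have := (hFderiv x hx).mul ((hRderiv x).exp)
    refine HasDerivAt.congr_deriv this ?_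
    ring
  -- key inequality
  have key : ∀ x, 0 ≤ 2 * v x * w x * ρ x + F x * φ x := by
    intro x
    have hA : Real.sqrt ap ^ 2 = ap := Real.sq_sqrt hap.le
    have hB : Real.sqrt hp ^ 2 = hp := Real.sq_sqrt hhp.le
    have hAB : Real.sqrt ap * Real.sqrt hp = s := (Real.sqrt_mul hap.le hp).symm
    have hF2 : 2 * s * |v x * w x| ≤ F x := by
      simp only [hF]
      rcases abs_cases (v x * w x) with ⟨he, _⟩ | ⟨he, _⟩ <;> rw [he] <;>
        nlinarith [sq_nonneg (Real.sqrt ap * v x - Real.sqrt hp * w x),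
          sq_nonneg (Real.sqrt ap * v x + Real.sqrt hp * w x), hA, hB, hAB]
    have h2 : -(2 * v x * w x * ρ x) ≤ (2 * s * |v x * w x|) * φ x := by
      have e1 : (2 * s * |v x * w x|) * φ x = 2 * |v x * w x * ρ x| := by
        rw [hφ]
        simp only
        rw [abs_mul (v x * w x) (ρ x)]
        field_simp
      rw [e1]
      calc -(2 * v x * w x * ρ x) ≤ |(-(2 * v x * w x * ρ x))| := le_abs_self _
        _ = |2 * (v x * w x * ρ x)| := by rw [abs_neg]; ring_nf
        _ = 2 * |v x * w x * ρ x| := by rw [abs_mul]; norm_num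
    have h3 : (2 * s * |v x * w x|) * φ x ≤ F x * φ x :=
      mul_le_mul_of_nonneg_right hF2 (hφnn x)
    linarith
  -- G monotone on Ici 1
  have hGmono : MonotoneOn G (Set.Ici (1:ℝ)) := by
    apply monotoneOn_of_deriv_nonneg (convex_Ici 1)
    · exact fun x hx => ((hGderiv x hx).continuousAt).continuousWithinAt
    · intro x hx
      rw [interior_Ici] at hx
      exact ((hGderiv x hx.le).differentiableAt).differentiableWithinAt
    · intro x hx
      rw [interior_Ici] at hx
      rw [(hGderiv x hx.le).deriv]
      exact mul_nonneg (key x) (Real.exp_pos _).le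
  -- limits
  have hFlim : Tendsto F atTop (nhds 0) := by
    have : Tendsto (fun x => ap * v x ^ 2 + hp * w x ^ 2) atTop
        (nhds (ap * 0 ^ 2 + hp * 0 ^ 2)) :=
      (((hv0.pow 2).const_mul ap).add ((hw0.pow 2).const_mul hp))
    simpa using this
  set B : ℝ := ∫ t in Set.Ici (1:ℝ), φ t with hB
  have hGnn : ∀ x, 0 ≤ G x := fun x => mul_nonneg (hFnn x) (Real.exp_pos _).le
  have hGle : ∀ x, G x ≤ F x * Real.exp B := fun x =>
    mul_le_mul_of_nonneg_left (Real.exp_le_exp.mpr (hRbdd x)) (hFnn x)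
  have hGlim : Tendsto G atTop (nhds 0) := by
    apply squeeze_zero hGnn hGle
    simpa using hFlim.mul_const (Real.exp B)
  -- conclude
  intro x hx
  have hGx0 : G x ≤ 0 := by
    apply ge_of_tendsto hGlim
    filter_upwards [eventually_ge_atTop x, eventually_ge_atTop (1:ℝ)] with y hyx hy1
    exact hGmono hx hy1 hyx
  have hGxe : G x = 0 := le_antisymm hGx0 (hGnn x)
  have hFx : F x = 0 := by
    have := mul_eq_zero.mp hGxe
    rcases this with h' | h'
    · exact h'
    · exact absurd h' (Real.exp_ne_zero _)
  have hv2 : v x ^ 2 = 0 := by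
    have h0 : ap * v x ^ 2 + hp * w x ^ 2 = 0 := hFx
    nlinarith [sq_nonneg (v x), sq_nonneg (w x)]
  have hw2 : w x ^ 2 = 0 := by
    have h0 : ap * v x ^ 2 + hp * w x ^ 2 = 0 := hFx
    nlinarith [sq_nonneg (v x), sq_nonneg (w x)]
  exact ⟨pow_eq_zero_iff (by norm_num) |>.mp hv2, pow_eq_zero_iff (by norm_num) |>.mp hw2⟩
end
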